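/- (Direct-sum majorization lemma) For any density matrix ρ and any d×d unitary matrix U relating two orthonormal bases, with induced probability vectors p and q, the 2d-dimensional vector (p₁,…,p_d,q₁,…,q_d) is majorized by the (d+1)-dimensional vector (1, s₁, s₂−s₁, …, s_d−s_{d−1}), i.e. p ⊕ q ≺ (1) ⊕ W (extending the shorter vector by zeros). -/

import Mathlib

open scoped BigOperators Matrix ComplexConjugate ComplexOrder

/-- Shannon entropy of a finite real vector (natural logarithm). -/
noncomputable def shannonEntropy {n : Type*} [Fintype n] (x : n → ℝ) : ℝ :=
  -∑ i, x i * Real.log (x i)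

/-- Von Neumann entropy of a Hermitian matrix, `-∑ λᵢ ln λᵢ`. -/
noncomputable def vonNeumannEntropy {d : ℕ} {ρ : Matrix (Fin d) (Fin d) ℂ}
    (hρ : ρ.IsHermitian) : ℝ :=
  -∑ i, hρ.eigenvalues i * Real.log (hρ.eigenvalues i)

/-- `Majorizes x y` means `x ≺ y`: the vectors have equal total sums and, for every `k`,
the sum of the `k` largest entries of `x` is at most the sum of the `k` largest entries
of `y` (formulated via subsets; the two index types may differ, which corresponds to
padding the shorter vector with zeros). -/
def Majorizes {ι κ : Type*} [Fintype ι] [Fintype κ] (x : ι → ℝ) (y : κ → ℝ) : Prop :=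
  (∑ i, x i = ∑ j, y j) ∧
  ∀ A : Finset ι, ∃ B : Finset κ, B.card ≤ A.card ∧ ∑ i ∈ A, x i ≤ ∑ j ∈ B, y j

/-- The operator norm (largest singular value) of the submatrix of `U` with rows `I`
and columns `J`, expressed as the supremum of `|⟨x, U y⟩|` over unit vectors supported
on `I` resp. `J`. -/
noncomputable def subOpNorm {d : ℕ} (U : Matrix (Fin d) (Fin d) ℂ)
    (I J : Finset (Fin d)) : ℝ :=
  sSup { r : ℝ | ∃ (x : I → ℂ) (y : J → ℂ),
    (∑ i, ‖x i‖ ^ 2 = 1) ∧ (∑ j, ‖y j‖ ^ 2 = 1) ∧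
    r = ‖∑ i : I, ∑ j : J, (starRingEnd ℂ) (x i) * U i.1 j.1 * y j‖ }

/-- `sCoef U k` is the coefficient `s_k`: the maximal operator norm of a submatrix of `U`
of class `k`, i.e. with `#rows + #cols = k + 1` (for `k = 0` the set is empty and the
supremum equals `0`). -/
noncomputable def sCoef {d : ℕ} (U : Matrix (Fin d) (Fin d) ℂ) (k : ℕ) : ℝ :=
  sSup { r : ℝ | ∃ I J : Finset (Fin d), I.Nonempty ∧ J.Nonempty ∧
    I.card + J.card = k + 1 ∧ r = subOpNorm U I J }

/-- The vector `W = (s₁, s₂ - s₁, …, s_d - s_{d-1})`. -/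
noncomputable def Wvec {d : ℕ} (U : Matrix (Fin d) (Fin d) ℂ) : Fin d → ℝ :=
  fun k => sCoef U (k.val + 1) - (if k.val = 0 then 0 else sCoef U k.val)

section helpers

variable {d : ℕ}

private lemma cs_sum (v w : Fin d → ℂ) :
    ‖∑ i, (starRingEnd ℂ) (v i) * w i‖ ≤
      Real.sqrt (∑ i, ‖v i‖ ^ 2) * Real.sqrt (∑ i, ‖w i‖ ^ 2) := by
  let V : EuclideanSpace ℂ (Fin d) := WithLp.toLp 2 v
  let W : EuclideanSpace ℂ (Fin d) := WithLp.toLp 2 w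
  have h1 : (inner ℂ V W : ℂ) = ∑ i, (starRingEnd ℂ) (v i) * w i := by
    simp [V, W, PiLp.inner_apply, mul_comm]
  have h2 := norm_inner_le_norm (𝕜 := ℂ) V W
  rw [h1] at h2
  rwa [EuclideanSpace.norm_eq, EuclideanSpace.norm_eq] at h2

private lemma mulvec_normsq {U : Matrix (Fin d) (Fin d) ℂ} (hU1 : Uᴴ * U = 1)
    (y : Fin d → ℂ) :
    ∑ x, ‖∑ j, U x j * y j‖ ^ 2 = ∑ j, ‖y j‖ ^ 2 := by
  have key : ∑ x, ((starRingEnd ℂ) (∑ j, U x j * y j) * (∑ j, U x j * y j)) =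
      ∑ j, ((starRingEnd ℂ) (y j) * y j) := by
    have horth : ∀ j k, ∑ x, (starRingEnd ℂ) (U x j) * U x k
        = if j = k then 1 else 0 := by
      intro j k
      have := congrFun (congrFun hU1 j) k
      simpa [Matrix.mul_apply, Matrix.conjTranspose_apply, Matrix.one_apply] using this
    calc ∑ x, ((starRingEnd ℂ) (∑ j, U x j * y j) * (∑ j, U x j * y j))
        = ∑ x, ∑ j, ∑ k, ((starRingEnd ℂ) (y j) * y k) *
            ((starRingEnd ℂ) (U x j) * U x k) := by
          refine Finset.sum_congr rfl fun x _ => ?_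
          rw [map_sum, Finset.sum_mul_sum]
          refine Finset.sum_congr rfl fun j _ => Finset.sum_congr rfl fun k _ => ?_
          simp only [map_mul]
          ring
      _ = ∑ j, ∑ k, ((starRingEnd ℂ) (y j) * y k) *
            (∑ x, (starRingEnd ℂ) (U x j) * U x k) := by
          rw [Finset.sum_comm]
          refine Finset.sum_congr rfl fun j _ => ?_
          rw [Finset.sum_comm]
          refine Finset.sum_congr rfl fun k _ => ?_
          rw [Finset.mul_sum]
      _ = ∑ j, ((starRingEnd ℂ) (y j) * y j) := by
          refine Finset.sum_congr rfl fun j _ => ?_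
          rw [Finset.sum_eq_single j]
          · rw [horth, if_pos rfl, mul_one]
          · intro k _ hk
            rw [horth, if_neg (Ne.symm hk), mul_zero]
          · intro h; exact absurd (Finset.mem_univ j) h
  have e1 : ∀ z : ℂ, ((starRingEnd ℂ) z * z).re = ‖z‖ ^ 2 := fun z => by
    rw [RCLike.conj_mul]; simp [← Complex.ofReal_pow]
  have hre := congrArg Complex.re key
  rw [Complex.re_sum, Complex.re_sum] at hre
  simpa only [e1] using hre

private def ext0 {I : Finset (Fin d)} (x : I → ℂ) : Fin d → ℂ :=
  fun i => if h : i ∈ I then x ⟨i, h⟩ else 0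

private lemma ext0_sum {M : Type*} [AddCommMonoid M] {I : Finset (Fin d)} (x : I → ℂ)
    (F : Fin d → ℂ → M) (hF : ∀ i, F i 0 = 0) :
    ∑ i, F i (ext0 x i) = ∑ i : I, F i.1 (x i) := by
  have h1 : ∑ i, F i (ext0 x i) = ∑ i ∈ I, F i (ext0 x i) :=
    (Finset.sum_subset I.subset_univ (fun i _ hi => by simp [ext0, dif_neg hi, hF])).symm
  rw [h1, ← Finset.sum_attach I (fun i => F i (ext0 x i)), Finset.univ_eq_attach]
  exact Finset.sum_congr rfl fun i _ => by simp [ext0, i.2]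

private lemma subOpNorm_nonneg (U : Matrix (Fin d) (Fin d) ℂ) (I J : Finset (Fin d)) :
    0 ≤ subOpNorm U I J :=
  Real.sSup_nonneg (by rintro r ⟨x, y, hx, hy, rfl⟩; positivity)

private lemma subOpNorm_elem_le_one {U : Matrix (Fin d) (Fin d) ℂ} (hU1 : Uᴴ * U = 1)
    {I J : Finset (Fin d)} {x : I → ℂ} {y : J → ℂ}
    (hx : ∑ i, ‖x i‖ ^ 2 = 1) (hy : ∑ j, ‖y j‖ ^ 2 = 1) :
    ‖∑ i : I, ∑ j : J, (starRingEnd ℂ) (x i) * U i.1 j.1 * y j‖ ≤ 1 := by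
  have hinner : ∀ i : Fin d, ∑ j, U i j * ext0 y j = ∑ j : J, U i j.1 * y j := fun i =>
    ext0_sum y (fun j c => U i j * c) (fun j => mul_zero _)
  have hsum : ∑ i : I, ∑ j : J, (starRingEnd ℂ) (x i) * U i.1 j.1 * y j
      = ∑ i, (starRingEnd ℂ) (ext0 x i) * (∑ j, U i j * ext0 y j) := by
    rw [ext0_sum x (fun i c => (starRingEnd ℂ) c * (∑ j, U i j * ext0 y j))
      (fun i => by simp)]
    refine Finset.sum_congr rfl fun i _ => ?_
    rw [hinner, Finset.mul_sum]
    exact Finset.sum_congr rfl fun j _ => by ring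
  have hx' : ∑ i, ‖ext0 x i‖ ^ 2 = 1 := by
    rw [ext0_sum x (fun _ c => ‖c‖ ^ 2) (fun i => by simp)]; exact hx
  have hy' : ∑ j, ‖ext0 y j‖ ^ 2 = 1 := by
    rw [ext0_sum y (fun _ c => ‖c‖ ^ 2) (fun j => by simp)]; exact hy
  have hz : ∑ i, ‖∑ j, U i j * ext0 y j‖ ^ 2 = 1 := by
    rw [mulvec_normsq hU1]; exact hy'
  calc ‖∑ i : I, ∑ j : J, (starRingEnd ℂ) (x i) * U i.1 j.1 * y j‖
      = ‖∑ i, (starRingEnd ℂ) (ext0 x i) * (∑ j, U i j * ext0 y j)‖ := by rw [hsum]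
    _ ≤ Real.sqrt (∑ i, ‖ext0 x i‖ ^ 2) *
          Real.sqrt (∑ i, ‖∑ j, U i j * ext0 y j‖ ^ 2) := cs_sum _ _
    _ = 1 := by rw [hx', hz, Real.sqrt_one, mul_one]

private lemma subOpNorm_le_one {U : Matrix (Fin d) (Fin d) ℂ} (hU1 : Uᴴ * U = 1)
    (I J : Finset (Fin d)) : subOpNorm U I J ≤ 1 :=
  Real.sSup_le (by rintro r ⟨x, y, hx, hy, rfl⟩; exact subOpNorm_elem_le_one hU1 hx hy)
    zero_le_one

private lemma le_subOpNorm {U : Matrix (Fin d) (Fin d) ℂ} (hU1 : Uᴴ * U = 1)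
    {I J : Finset (Fin d)} {x : I → ℂ} {y : J → ℂ}
    (hx : ∑ i, ‖x i‖ ^ 2 = 1) (hy : ∑ j, ‖y j‖ ^ 2 = 1) :
    ‖∑ i : I, ∑ j : J, (starRingEnd ℂ) (x i) * U i.1 j.1 * y j‖ ≤ subOpNorm U I J :=
  le_csSup ⟨1, by rintro r ⟨x', y', hx', hy', rfl⟩; exact subOpNorm_elem_le_one hU1 hx' hy'⟩
    ⟨x, y, hx, hy, rfl⟩

private lemma scaled_le {U : Matrix (Fin d) (Fin d) ℂ} (hU1 : Uᴴ * U = 1)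
    {I J : Finset (Fin d)} (x : I → ℂ) (y : J → ℂ) :
    ‖∑ i : I, ∑ j : J, (starRingEnd ℂ) (x i) * U i.1 j.1 * y j‖ ≤
      subOpNorm U I J *
        (Real.sqrt (∑ i, ‖x i‖ ^ 2) * Real.sqrt (∑ j, ‖y j‖ ^ 2)) := by
  set X := ∑ i, ‖x i‖ ^ 2 with hXdef
  set Y := ∑ j, ‖y j‖ ^ 2 with hYdef
  have hXnn : 0 ≤ X := Finset.sum_nonneg fun i _ => sq_nonneg _
  have hYnn : 0 ≤ Y := Finset.sum_nonneg fun j _ => sq_nonneg _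
  rcases eq_or_lt_of_le hXnn with hX0 | hXpos
  · have hx0 : ∀ i, x i = 0 := by
      intro i
      have h := (Finset.sum_eq_zero_iff_of_nonneg (fun i _ => sq_nonneg ‖x i‖)).1
        hX0.symm i (Finset.mem_univ i)
      simpa using h
    simp only [hx0, map_zero, zero_mul, Finset.sum_const_zero, norm_zero]
    exact mul_nonneg (subOpNorm_nonneg U I J)
      (mul_nonneg (Real.sqrt_nonneg _) (Real.sqrt_nonneg _))
  rcases eq_or_lt_of_le hYnn with hY0 | hYpos
  · have hy0 : ∀ j, y j = 0 := by
      intro j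
      have h := (Finset.sum_eq_zero_iff_of_nonneg (fun j _ => sq_nonneg ‖y j‖)).1
        hY0.symm j (Finset.mem_univ j)
      simpa using h
    simp only [hy0, mul_zero, Finset.sum_const_zero, norm_zero]
    exact mul_nonneg (subOpNorm_nonneg U I J)
      (mul_nonneg (Real.sqrt_nonneg _) (Real.sqrt_nonneg _))
  · -- main case
    have hsX : (0:ℝ) < Real.sqrt X := Real.sqrt_pos.2 hXpos
    have hsY : (0:ℝ) < Real.sqrt Y := Real.sqrt_pos.2 hYpos
    set cx : ℂ := (((Real.sqrt X)⁻¹ : ℝ) : ℂ)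
    set cy : ℂ := (((Real.sqrt Y)⁻¹ : ℝ) : ℂ)
    have hncx : ‖cx‖ = (Real.sqrt X)⁻¹ := by
      rw [Complex.norm_real, Real.norm_eq_abs, abs_of_nonneg (inv_nonneg.2 hsX.le)]
    have hncy : ‖cy‖ = (Real.sqrt Y)⁻¹ := by
      rw [Complex.norm_real, Real.norm_eq_abs, abs_of_nonneg (inv_nonneg.2 hsY.le)]
    have hx1 : ∑ i, ‖x i * cx‖ ^ 2 = 1 := by
      have : ∀ i : I, ‖x i * cx‖ ^ 2 = ‖x i‖ ^ 2 * ((Real.sqrt X)⁻¹) ^ 2 := fun i => by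
        rw [norm_mul, mul_pow, hncx]
      rw [Finset.sum_congr rfl fun i _ => this i, ← Finset.sum_mul, ← hXdef]
      rw [← Real.sqrt_inv, Real.sq_sqrt (inv_nonneg.2 hXnn)]
      field_simp
    have hy1 : ∑ j, ‖y j * cy‖ ^ 2 = 1 := by
      have : ∀ j : J, ‖y j * cy‖ ^ 2 = ‖y j‖ ^ 2 * ((Real.sqrt Y)⁻¹) ^ 2 := fun j => by
        rw [norm_mul, mul_pow, hncy]
      rw [Finset.sum_congr rfl fun j _ => this j, ← Finset.sum_mul, ← hYdef]
      rw [← Real.sqrt_inv, Real.sq_sqrt (inv_nonneg.2 hYnn)]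
      field_simp
    have hkey : ∑ i : I, ∑ j : J, (starRingEnd ℂ) (x i * cx) * U i.1 j.1 * (y j * cy)
        = (cx * cy) * ∑ i : I, ∑ j : J, (starRingEnd ℂ) (x i) * U i.1 j.1 * y j := by
      rw [Finset.mul_sum]
      refine Finset.sum_congr rfl fun i _ => ?_
      rw [Finset.mul_sum]
      refine Finset.sum_congr rfl fun j _ => ?_
      have : (starRingEnd ℂ) cx = cx := Complex.conj_ofReal _
      rw [map_mul, this]
      ring
    have hle := le_subOpNorm hU1 hx1 hy1
    rw [hkey, norm_mul, norm_mul, hncx, hncy] at hle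
    set S := ‖∑ i : I, ∑ j : J, (starRingEnd ℂ) (x i) * U i.1 j.1 * y j‖ with hSdef
    have heq : Real.sqrt X * Real.sqrt Y * ((Real.sqrt X)⁻¹ * ((Real.sqrt Y)⁻¹ * S)) = S := by
      field_simp
    rw [mul_comm (subOpNorm U I J)]
    calc S = Real.sqrt X * Real.sqrt Y * ((Real.sqrt X)⁻¹ * ((Real.sqrt Y)⁻¹ * S)) := heq.symm
      _ ≤ Real.sqrt X * Real.sqrt Y * subOpNorm U I J := by
          refine mul_le_mul_of_nonneg_left ?_ (mul_pos hsX hsY).le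
          calc (Real.sqrt X)⁻¹ * ((Real.sqrt Y)⁻¹ * S)
              = (Real.sqrt X)⁻¹ * (Real.sqrt Y)⁻¹ * S := by ring
            _ ≤ subOpNorm U I J := hle

private lemma sCoef_nonneg (U : Matrix (Fin d) (Fin d) ℂ) (k : ℕ) : 0 ≤ sCoef U k :=
  Real.sSup_nonneg (by rintro r ⟨I, J, _, _, _, rfl⟩; exact subOpNorm_nonneg U I J)

private lemma subOpNorm_le_sCoef {U : Matrix (Fin d) (Fin d) ℂ} (hU1 : Uᴴ * U = 1)
    {I J : Finset (Fin d)} (hI : I.Nonempty) (hJ : J.Nonempty) {k : ℕ}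
    (hc : I.card + J.card = k + 1) : subOpNorm U I J ≤ sCoef U k :=
  le_csSup ⟨1, by rintro r ⟨I', J', _, _, _, rfl⟩; exact subOpNorm_le_one hU1 I' J'⟩
    ⟨I, J, hI, hJ, hc, rfl⟩

private lemma sCoef_le_one {U : Matrix (Fin d) (Fin d) ℂ} (hU1 : Uᴴ * U = 1) (k : ℕ) :
    sCoef U k ≤ 1 :=
  Real.sSup_le (by rintro r ⟨I, J, _, _, _, rfl⟩; exact subOpNorm_le_one hU1 I J)
    zero_le_one

private lemma sCoef_d_eq_one {U : Matrix (Fin d) (Fin d) ℂ} (hd : 1 ≤ d)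
    (hU1 : Uᴴ * U = 1) : sCoef U d = 1 := by
  refine le_antisymm (sCoef_le_one hU1 d) ?_
  have hd0 : 0 < d := hd
  set j0 : Fin d := ⟨0, hd0⟩
  have hcol : ∑ i, (starRingEnd ℂ) (U i j0) * U i j0 = 1 := by
    have := congrFun (congrFun hU1 j0) j0
    simpa [Matrix.mul_apply, Matrix.conjTranspose_apply, Matrix.one_apply] using this
  set x : ((Finset.univ : Finset (Fin d)) : Type) → ℂ := fun i => U i.1 j0 with hxdef
  set y : (({j0} : Finset (Fin d)) : Type) → ℂ := fun _ => 1 with hydef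
  have hcolre : ∑ i, ‖U i j0‖ ^ 2 = 1 := by
    have := congrArg Complex.re hcol
    rw [Complex.re_sum] at this
    simpa only [fun z : ℂ => show ((starRingEnd ℂ) z * z).re = ‖z‖ ^ 2 from by
      rw [RCLike.conj_mul]; simp [← Complex.ofReal_pow], Complex.one_re] using this
  have hx : ∑ i, ‖x i‖ ^ 2 = 1 := by
    rw [hxdef]
    rw [Finset.sum_coe_sort (Finset.univ) (fun i => ‖U i j0‖ ^ 2)]
    simpa using hcolre
  have hy : ∑ j, ‖y j‖ ^ 2 = 1 := by simp [hydef]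
  have hval : ∑ i : (Finset.univ : Finset (Fin d)), ∑ j : ({j0} : Finset (Fin d)),
      (starRingEnd ℂ) (x i) * U i.1 j.1 * y j = 1 := by
    have hinner : ∀ i : (Finset.univ : Finset (Fin d)),
        ∑ j : ({j0} : Finset (Fin d)), (starRingEnd ℂ) (x i) * U i.1 j.1 * y j
          = (starRingEnd ℂ) (U i.1 j0) * U i.1 j0 := by
      intro i
      rw [Finset.sum_coe_sort ({j0} : Finset (Fin d))
        (fun j => (starRingEnd ℂ) (x i) * U i.1 j * 1)]
      · simp [hxdef]
    rw [Finset.sum_congr rfl fun i _ => hinner i,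
      Finset.sum_coe_sort (Finset.univ) (fun i => (starRingEnd ℂ) (U i j0) * U i j0)]
    simpa using hcol
  have h1 : (1:ℝ) ≤ subOpNorm U Finset.univ {j0} := by
    have := le_subOpNorm hU1 hx hy
    rw [hval] at this
    simpa using this
  refine le_trans h1 (subOpNorm_le_sCoef hU1 ⟨j0, Finset.mem_univ j0⟩
    ⟨j0, Finset.mem_singleton_self j0⟩ ?_)
  simp

private lemma keyvec {U : Matrix (Fin d) (Fin d) ℂ} (hU1 : Uᴴ * U = 1)
    (I J : Finset (Fin d)) (v : Fin d → ℂ) :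
    ∑ i ∈ I, ‖v i‖ ^ 2 + ∑ j ∈ J, ‖∑ a, (starRingEnd ℂ) (v a) * U a j‖ ^ 2
      ≤ (1 + subOpNorm U I J) * ∑ a, ‖v a‖ ^ 2 := by
  set c : Fin d → ℂ := fun j => ∑ a, (starRingEnd ℂ) (v a) * U a j with hcdef
  set α2 := ∑ i ∈ I, ‖v i‖ ^ 2 with hα2
  set β2 := ∑ j ∈ J, ‖c j‖ ^ 2 with hβ2
  set N := ∑ a, ‖v a‖ ^ 2 with hN
  set s := subOpNorm U I J with hs
  have h0s : 0 ≤ s := subOpNorm_nonneg U I J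
  have h0α : 0 ≤ α2 := Finset.sum_nonneg fun _ _ => sq_nonneg _
  have h0β : 0 ≤ β2 := Finset.sum_nonneg fun _ _ => sq_nonneg _
  have h0N : 0 ≤ N := Finset.sum_nonneg fun _ _ => sq_nonneg _
  let V : EuclideanSpace ℂ (Fin d) := WithLp.toLp 2 v
  let A : EuclideanSpace ℂ (Fin d) := WithLp.toLp 2 (fun x => if x ∈ I then v x else 0)
  let y' : Fin d → ℂ := fun j => if j ∈ J then (starRingEnd ℂ) (c j) else 0
  let B : EuclideanSpace ℂ (Fin d) := WithLp.toLp 2 (fun x => ∑ j, U x j * y' j)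
  have cmul : ∀ z : ℂ, (starRingEnd ℂ) z * z = ((‖z‖ ^ 2 : ℝ) : ℂ) := fun z => by
    rw [RCLike.conj_mul]; simp [← Complex.ofReal_pow]
  -- inner V A
  have hVA : (inner ℂ V A : ℂ) = (α2 : ℂ) := by
    simp only [PiLp.inner_apply, RCLike.inner_apply']
    calc ∑ x, (starRingEnd ℂ) (V x) * A x
        = ∑ x, (if x ∈ I then (starRingEnd ℂ) (v x) * v x else 0) := by
          refine Finset.sum_congr rfl fun x _ => ?_
          by_cases hx : x ∈ I <;> simp [A, V, hx]
      _ = ∑ x ∈ I, (starRingEnd ℂ) (v x) * v x := by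
          rw [Finset.sum_ite_mem, Finset.univ_inter]
      _ = (α2 : ℂ) := by
          rw [hα2, Complex.ofReal_sum]
          exact Finset.sum_congr rfl fun x _ => cmul (v x)
  -- inner V B
  have hswap : ∀ w : Fin d → ℂ,
      ∑ x, (starRingEnd ℂ) (w x) * (∑ j, U x j * y' j)
        = ∑ j ∈ J, (starRingEnd ℂ) (c j) * (∑ x, (starRingEnd ℂ) (w x) * U x j) := by
    intro w
    calc ∑ x, (starRingEnd ℂ) (w x) * (∑ j, U x j * y' j)
        = ∑ x, ∑ j, y' j * ((starRingEnd ℂ) (w x) * U x j) := by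
          refine Finset.sum_congr rfl fun x _ => ?_
          rw [Finset.mul_sum]
          exact Finset.sum_congr rfl fun j _ => by ring
      _ = ∑ j, y' j * (∑ x, (starRingEnd ℂ) (w x) * U x j) := by
          rw [Finset.sum_comm]
          exact Finset.sum_congr rfl fun j _ => by rw [Finset.mul_sum]
      _ = ∑ j, (if j ∈ J then (starRingEnd ℂ) (c j) * (∑ x, (starRingEnd ℂ) (w x) * U x j)
            else 0) := by
          refine Finset.sum_congr rfl fun j _ => ?_
          by_cases hj : j ∈ J <;> simp [y', hj]
      _ = ∑ j ∈ J, (starRingEnd ℂ) (c j) * (∑ x, (starRingEnd ℂ) (w x) * U x j) := by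
          rw [Finset.sum_ite_mem, Finset.univ_inter]
  have hVB : (inner ℂ V B : ℂ) = (β2 : ℂ) := by
    simp only [PiLp.inner_apply, RCLike.inner_apply']
    calc ∑ x, (starRingEnd ℂ) (V x) * B x
        = ∑ j ∈ J, (starRingEnd ℂ) (c j) * (∑ x, (starRingEnd ℂ) (v x) * U x j) :=
          hswap v
      _ = ∑ j ∈ J, (starRingEnd ℂ) (c j) * c j := by rw [hcdef]
      _ = (β2 : ℂ) := by
          rw [hβ2, Complex.ofReal_sum]
          exact Finset.sum_congr rfl fun j _ => cmul (c j)
  -- norms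
  have hnA : ‖A‖ ^ 2 = α2 := by
    rw [EuclideanSpace.norm_eq, Real.sq_sqrt (Finset.sum_nonneg fun _ _ => sq_nonneg _)]
    calc ∑ x, ‖A x‖ ^ 2 = ∑ x, (if x ∈ I then ‖v x‖ ^ 2 else 0) := by
          refine Finset.sum_congr rfl fun x _ => ?_
          by_cases hx : x ∈ I <;> simp [A, hx]
      _ = α2 := by rw [Finset.sum_ite_mem, Finset.univ_inter, hα2]
  have hy'n : ∑ j, ‖y' j‖ ^ 2 = β2 := by
    calc ∑ j, ‖y' j‖ ^ 2 = ∑ j, (if j ∈ J then ‖c j‖ ^ 2 else 0) := by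
          refine Finset.sum_congr rfl fun j _ => ?_
          by_cases hj : j ∈ J <;> simp [y', hj]
      _ = β2 := by rw [Finset.sum_ite_mem, Finset.univ_inter, hβ2]
  have hnB : ‖B‖ ^ 2 = β2 := by
    rw [EuclideanSpace.norm_eq, Real.sq_sqrt (Finset.sum_nonneg fun _ _ => sq_nonneg _)]
    calc ∑ x, ‖B x‖ ^ 2 = ∑ j, ‖y' j‖ ^ 2 := mulvec_normsq hU1 y'
      _ = β2 := hy'n
  have hnV : ‖V‖ ^ 2 = N := by
    rw [EuclideanSpace.norm_eq, Real.sq_sqrt (Finset.sum_nonneg fun _ _ => sq_nonneg _)]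
  -- inner A B bound
  have hAB : ‖(inner ℂ A B : ℂ)‖ ≤ s * (Real.sqrt α2 * Real.sqrt β2) := by
    have hABeq : (inner ℂ A B : ℂ) =
        ∑ i : I, ∑ j : J, (starRingEnd ℂ) ((fun i : I => v i.1) i) * U i.1 j.1 *
          ((fun j : J => (starRingEnd ℂ) (c j.1)) j) := by
      simp only [PiLp.inner_apply, RCLike.inner_apply']
      calc ∑ x, (starRingEnd ℂ) (A x) * B x
          = ∑ j ∈ J, (starRingEnd ℂ) (c j) * (∑ x, (starRingEnd ℂ) (A x) * U x j) :=
            hswap A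
        _ = ∑ j ∈ J, (starRingEnd ℂ) (c j) * (∑ i ∈ I, (starRingEnd ℂ) (v i) * U i j) := by
            refine Finset.sum_congr rfl fun j _ => ?_
            congr 1
            calc ∑ x, (starRingEnd ℂ) (A x) * U x j
                = ∑ x, (if x ∈ I then (starRingEnd ℂ) (v x) * U x j else 0) := by
                  refine Finset.sum_congr rfl fun x _ => ?_
                  by_cases hx : x ∈ I <;> simp [A, hx]
              _ = ∑ i ∈ I, (starRingEnd ℂ) (v i) * U i j := by
                  rw [Finset.sum_ite_mem, Finset.univ_inter]
        _ = ∑ i ∈ I, ∑ j ∈ J, (starRingEnd ℂ) (v i) * U i j * (starRingEnd ℂ) (c j) := by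
            rw [Finset.sum_comm]
            refine Finset.sum_congr rfl fun j _ => ?_
            rw [Finset.mul_sum]
            exact Finset.sum_congr rfl fun i _ => by ring
        _ = ∑ i : I, ∑ j : J, (starRingEnd ℂ) (v i.1) * U i.1 j.1 * (starRingEnd ℂ) (c j.1) := by
            rw [Finset.sum_coe_sort I
              (fun i => ∑ j : J, (starRingEnd ℂ) (v i) * U i j.1 * (starRingEnd ℂ) (c j.1))]
            refine Finset.sum_congr rfl fun i _ => ?_
            rw [Finset.sum_coe_sort J
              (fun j => (starRingEnd ℂ) (v i) * U i j * (starRingEnd ℂ) (c j))]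
    have hXeq : ∑ i : I, ‖(fun i : I => v i.1) i‖ ^ 2 = α2 := by
      rw [hα2]; exact Finset.sum_coe_sort I (fun i => ‖v i‖ ^ 2)
    have hYeq : ∑ j : J, ‖(fun j : J => (starRingEnd ℂ) (c j.1)) j‖ ^ 2 = β2 := by
      rw [hβ2]
      calc ∑ j : J, ‖(starRingEnd ℂ) (c j.1)‖ ^ 2 = ∑ j : J, ‖c j.1‖ ^ 2 := by
            refine Finset.sum_congr rfl fun j _ => ?_
            rw [RCLike.norm_conj]
        _ = ∑ j ∈ J, ‖c j‖ ^ 2 := Finset.sum_coe_sort J (fun j => ‖c j‖ ^ 2)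
    have := scaled_le hU1 (fun i : I => v i.1) (fun j : J => (starRingEnd ℂ) (c j.1))
    rw [hXeq, hYeq] at this
    rw [hABeq]
    exact this
  -- final arithmetic
  have hVAB : (inner ℂ V (A + B) : ℂ) = ((α2 + β2 : ℝ) : ℂ) := by
    rw [inner_add_right, hVA, hVB]; push_cast; ring
  have ht1 : α2 + β2 ≤ ‖V‖ * ‖A + B‖ := by
    have h1 : α2 + β2 = RCLike.re (inner ℂ V (A + B) : ℂ) := by rw [hVAB]; simp
    rw [h1]
    exact le_trans (RCLike.re_le_norm _) (norm_inner_le_norm V (A + B))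
  have hsqrt2 : 2 * (Real.sqrt α2 * Real.sqrt β2) ≤ α2 + β2 := by
    nlinarith [Real.sq_sqrt h0α, Real.sq_sqrt h0β, sq_nonneg (Real.sqrt α2 - Real.sqrt β2)]
  have ht2 : ‖A + B‖ ^ 2 ≤ (1 + s) * (α2 + β2) := by
    have hre : RCLike.re (inner ℂ A B : ℂ) ≤ s * (Real.sqrt α2 * Real.sqrt β2) :=
      le_trans (RCLike.re_le_norm _) hAB
    have := norm_add_sq (𝕜 := ℂ) A B
    rw [this, hnA, hnB]
    nlinarith [mul_le_mul_of_nonneg_left hsqrt2 h0s]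
  -- combine
  rcases eq_or_lt_of_le (add_nonneg h0α h0β) with ht0 | htpos
  · rw [← ht0]
    positivity
  · have hsq : (α2 + β2) ^ 2 ≤ (N * (1 + s)) * (α2 + β2) := by
      calc (α2 + β2) ^ 2 ≤ (‖V‖ * ‖A + B‖) ^ 2 := by
            exact pow_le_pow_left₀ (le_of_lt htpos) ht1 2
        _ = ‖V‖ ^ 2 * ‖A + B‖ ^ 2 := by ring
        _ ≤ N * ((1 + s) * (α2 + β2)) := by
            rw [hnV]
            exact mul_le_mul_of_nonneg_left ht2 h0N
        _ = (N * (1 + s)) * (α2 + β2) := by ring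
    have := le_of_mul_le_mul_right (by nlinarith [hsq] : (α2 + β2) * (α2 + β2) ≤ (N * (1 + s)) * (α2 + β2)) htpos
    linarith [this]

private lemma rep_p (Bm : Matrix (Fin d) (Fin d) ℂ) (i : Fin d) :
    ((Bmᴴ * Bm) i i).re = ∑ k, ‖Bm k i‖ ^ 2 := by
  rw [Matrix.mul_apply, Complex.re_sum]
  refine Finset.sum_congr rfl fun k _ => ?_
  rw [Matrix.conjTranspose_apply]
  rw [show star (Bm k i) = (starRingEnd ℂ) (Bm k i) from rfl, RCLike.conj_mul]
  simp [← Complex.ofReal_pow]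

private lemma rep_q (U Bm : Matrix (Fin d) (Fin d) ℂ) (j : Fin d) :
    ((Uᴴ * (Bmᴴ * Bm) * U) j j).re = ∑ k, ‖(Bm * U) k j‖ ^ 2 := by
  have hM : Uᴴ * (Bmᴴ * Bm) * U = (Bm * U)ᴴ * (Bm * U) := by
    rw [Matrix.conjTranspose_mul]
    simp [Matrix.mul_assoc]
  rw [hM]
  exact rep_p (Bm * U) j

private lemma main_bound {U : Matrix (Fin d) (Fin d) ℂ} (hU1 : Uᴴ * U = 1)
    (Bm : Matrix (Fin d) (Fin d) ℂ) (htr : (Bmᴴ * Bm).trace = 1)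
    (I J : Finset (Fin d)) :
    ∑ i ∈ I, ((Bmᴴ * Bm) i i).re + ∑ j ∈ J, ((Uᴴ * (Bmᴴ * Bm) * U) j j).re
      ≤ 1 + subOpNorm U I J := by
  set s := subOpNorm U I J with hs
  have hsum1 : ∑ k, ∑ a, ‖Bm k a‖ ^ 2 = 1 := by
    have h := congrArg Complex.re htr
    rw [Matrix.trace] at h
    simp only [Matrix.diag] at h
    rw [Complex.re_sum] at h
    rw [Finset.sum_congr rfl fun i _ => rep_p Bm i] at h
    rw [Finset.sum_comm] at h
    simpa using h
  have hBU : ∀ k j, (Bm * U) k j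
      = ∑ a, (starRingEnd ℂ) ((fun a => (starRingEnd ℂ) (Bm k a)) a) * U a j := by
    intro k j
    rw [Matrix.mul_apply]
    refine Finset.sum_congr rfl fun a _ => ?_
    simp
  calc ∑ i ∈ I, ((Bmᴴ * Bm) i i).re + ∑ j ∈ J, ((Uᴴ * (Bmᴴ * Bm) * U) j j).re
      = ∑ i ∈ I, ∑ k, ‖Bm k i‖ ^ 2 + ∑ j ∈ J, ∑ k, ‖(Bm * U) k j‖ ^ 2 := by
        rw [Finset.sum_congr rfl fun i _ => rep_p Bm i,
          Finset.sum_congr rfl fun j _ => rep_q U Bm j]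
    _ = ∑ k, (∑ i ∈ I, ‖Bm k i‖ ^ 2 + ∑ j ∈ J, ‖(Bm * U) k j‖ ^ 2) := by
        rw [Finset.sum_add_distrib, Finset.sum_comm (s := I), Finset.sum_comm (s := J)]
    _ ≤ ∑ k, (1 + s) * ∑ a, ‖Bm k a‖ ^ 2 := by
        refine Finset.sum_le_sum fun k _ => ?_
        have hkv := keyvec hU1 I J (fun a => (starRingEnd ℂ) (Bm k a))
        have e1 : ∑ i ∈ I, ‖(starRingEnd ℂ) (Bm k i)‖ ^ 2 = ∑ i ∈ I, ‖Bm k i‖ ^ 2 :=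
          Finset.sum_congr rfl fun i _ => by rw [RCLike.norm_conj]
        have e2 : ∑ a, ‖(starRingEnd ℂ) (Bm k a)‖ ^ 2 = ∑ a, ‖Bm k a‖ ^ 2 :=
          Finset.sum_congr rfl fun a _ => by rw [RCLike.norm_conj]
        have e3 : ∑ j ∈ J, ‖∑ a, (starRingEnd ℂ) ((starRingEnd ℂ) (Bm k a)) * U a j‖ ^ 2
            = ∑ j ∈ J, ‖(Bm * U) k j‖ ^ 2 :=
          Finset.sum_congr rfl fun j _ => by rw [← hBU k j]
        rw [e1, e2, e3] at hkv
        exact hkv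
    _ = (1 + s) * ∑ k, ∑ a, ‖Bm k a‖ ^ 2 := by rw [← Finset.mul_sum]
    _ = 1 + s := by rw [hsum1, mul_one]

private lemma cons_partial (U : Matrix (Fin d) (Fin d) ℂ) :
    ∀ m, ∀ h : m + 1 ≤ d + 1,
      ∑ i : Fin (m + 1), (Fin.cons 1 (Wvec U) : Fin (d + 1) → ℝ) (Fin.castLE h i)
        = 1 + (if m = 0 then 0 else sCoef U m) := by
  intro m
  induction m with
  | zero =>
    intro h
    simp
  | succ m ih =>
    intro h
    rw [Fin.sum_univ_castSucc]
    have hcast : ∀ i : Fin (m + 1),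
        Fin.castLE h (Fin.castSucc i) = Fin.castLE (by omega : m + 1 ≤ d + 1) i := by
      intro i; ext; simp
    rw [Finset.sum_congr rfl fun i _ => congrArg _ (hcast i), ih (by omega)]
    have hlast : (Fin.castLE h (Fin.last (m + 1))) =
        Fin.succ ⟨m, by omega⟩ := by ext; simp
    rw [hlast, Fin.cons_succ]
    have : Wvec U ⟨m, by omega⟩ = sCoef U (m + 1) - (if m = 0 then 0 else sCoef U m) := by
      simp [Wvec]
    rw [this]
    simp only [Nat.succ_ne_zero, if_false]
    ring

private lemma sum_Wvec (hd : 1 ≤ d) (U : Matrix (Fin d) (Fin d) ℂ) :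
    ∑ k, Wvec U k = sCoef U d := by
  set g : ℕ → ℝ := fun n => if n = 0 then 0 else sCoef U n with hg
  have h1 : ∀ k : Fin d, Wvec U k = (fun n => g (n + 1) - g n) k.val := by
    intro k
    simp [Wvec, hg]
  rw [Finset.sum_congr rfl fun k _ => h1 k,
    Fin.sum_univ_eq_sum_range (fun n => g (n + 1) - g n) d,
    Finset.sum_range_sub g d, hg]
  simp
  intro h
  exact absurd hd (by omega)

end helpers

/-- **Direct-sum majorization lemma**: the `2d`-dimensional vector `p ⊕ q` is majorized
by the `(d+1)`-dimensional vector `(1, s₁, s₂ - s₁, …, s_d - s_{d-1}) = (1) ⊕ W`. -/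
theorem stmt_5 (d : ℕ) (hd : 2 ≤ d)
    (U : Matrix (Fin d) (Fin d) ℂ) (hU : U ∈ Matrix.unitaryGroup (Fin d) ℂ)
    (ρ : Matrix (Fin d) (Fin d) ℂ) (hρ : ρ.PosSemidef) (hρtr : ρ.trace = 1)
    (p q : Fin d → ℝ)
    (hp : ∀ i, p i = (ρ i i).re)
    (hq : ∀ j, q j = ((Uᴴ * ρ * U) j j).re) :
    Majorizes (Sum.elim p q) (Fin.cons 1 (Wvec U) : Fin (d + 1) → ℝ) := by
  have hU1 : Uᴴ * U = 1 := by
    have h := Unitary.star_mul_self_of_mem hU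
    rwa [Matrix.star_eq_conjTranspose] at h
  have hU2 : U * Uᴴ = 1 := by
    have h := Unitary.mul_star_self_of_mem hU
    rwa [Matrix.star_eq_conjTranspose] at h
  obtain ⟨Bm, hB⟩ : ∃ Bm : Matrix (Fin d) (Fin d) ℂ, ρ = Bmᴴ * Bm := by
    open scoped MatrixOrder in
    obtain ⟨B, hB⟩ := CStarAlgebra.nonneg_iff_eq_star_mul_self.mp hρ.nonneg
    exact ⟨B, hB⟩
  subst hB
  have hd1 : 1 ≤ d := by omega
  have hsd : sCoef U d = 1 := sCoef_d_eq_one hd1 hU1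
  have hW : ∑ k, Wvec U k = sCoef U d := sum_Wvec hd1 U
  -- representations
  have hp_rep : ∀ i, p i = ∑ k, ‖Bm k i‖ ^ 2 := fun i => by rw [hp i, rep_p]
  have hq_rep : ∀ j, q j = ∑ k, ‖(Bm * U) k j‖ ^ 2 := fun j => by rw [hq j, rep_q]
  have hp0 : ∀ i, 0 ≤ p i := fun i => by rw [hp_rep]; positivity
  have hq0 : ∀ j, 0 ≤ q j := fun j => by rw [hq_rep]; positivity
  have hsump : ∑ i, p i = 1 := by
    have h := congrArg Complex.re hρtr
    rw [Matrix.trace] at h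
    simp only [Matrix.diag] at h
    rw [Complex.re_sum] at h
    rw [Finset.sum_congr rfl fun i (_ : i ∈ Finset.univ) => hp i]
    simpa using h
  have hqtr : (Uᴴ * (Bmᴴ * Bm) * U).trace = 1 := by
    rw [Matrix.trace_mul_cycle, ← Matrix.mul_assoc, hU2, Matrix.one_mul, hρtr]
  have hsumq : ∑ j, q j = 1 := by
    have h := congrArg Complex.re hqtr
    rw [Matrix.trace] at h
    simp only [Matrix.diag] at h
    rw [Complex.re_sum] at h
    rw [Finset.sum_congr rfl fun j (_ : j ∈ Finset.univ) => hq j]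
    simpa using h
  have hycons : ∑ j, (Fin.cons 1 (Wvec U) : Fin (d + 1) → ℝ) j = 2 := by
    rw [Fin.sum_cons, hW, hsd]; norm_num
  constructor
  · rw [Fintype.sum_sum_type]
    simp only [Sum.elim_inl, Sum.elim_inr]
    rw [hsump, hsumq, hycons]
    norm_num
  · intro A
    have hsplit : ∑ x ∈ A, Sum.elim p q x = ∑ i ∈ A.toLeft, p i + ∑ j ∈ A.toRight, q j := by
      conv_lhs => rw [← Finset.toLeft_disjSum_toRight (u := A)]
      rw [Finset.sum_sumElim]
    have hcard : A.toLeft.card + A.toRight.card = A.card :=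
      Finset.card_toLeft_add_card_toRight
    have hIle : ∑ i ∈ A.toLeft, p i ≤ 1 := by
      rw [← hsump]
      exact Finset.sum_le_sum_of_subset_of_nonneg (Finset.subset_univ _)
        (fun i _ _ => hp0 i)
    have hJle : ∑ j ∈ A.toRight, q j ≤ 1 := by
      rw [← hsumq]
      exact Finset.sum_le_sum_of_subset_of_nonneg (Finset.subset_univ _)
        (fun j _ _ => hq0 j)
    by_cases hIe : A.toLeft = ∅
    · by_cases hJe : A.toRight = ∅
      · refine ⟨∅, by simp, ?_⟩
        rw [hsplit, hIe, hJe]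
        simp
      · refine ⟨{0}, ?_, ?_⟩
        · have : 1 ≤ A.toRight.card := Finset.card_pos.2 (Finset.nonempty_iff_ne_empty.2 hJe)
          simp only [Finset.card_singleton]
          omega
        · rw [hsplit, hIe, Finset.sum_empty, Finset.sum_singleton, Fin.cons_zero]
          linarith [hJle]
    · by_cases hJe : A.toRight = ∅
      · refine ⟨{0}, ?_, ?_⟩
        · have : 1 ≤ A.toLeft.card := Finset.card_pos.2 (Finset.nonempty_iff_ne_empty.2 hIe)
          simp only [Finset.card_singleton]
          omega
        · rw [hsplit, hJe, Finset.sum_empty, Finset.sum_singleton, Fin.cons_zero]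
          linarith [hIle]
      · have hIne : A.toLeft.Nonempty := Finset.nonempty_iff_ne_empty.2 hIe
        have hJne : A.toRight.Nonempty := Finset.nonempty_iff_ne_empty.2 hJe
        have hI1 : 1 ≤ A.toLeft.card := Finset.card_pos.2 hIne
        have hJ1 : 1 ≤ A.toRight.card := Finset.card_pos.2 hJne
        by_cases hbig : A.toLeft.card + A.toRight.card ≤ d + 1
        · set m := A.toLeft.card + A.toRight.card - 1 with hm
          have hmd : m + 1 ≤ d + 1 := by omega
          refine ⟨(Finset.univ : Finset (Fin (m + 1))).map (Fin.castLEEmb hmd), ?_, ?_⟩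
          · rw [Finset.card_map, Finset.card_univ, Fintype.card_fin, ← hcard]
            omega
          · have hBsum : ∑ j ∈ (Finset.univ : Finset (Fin (m + 1))).map (Fin.castLEEmb hmd),
                (Fin.cons 1 (Wvec U) : Fin (d + 1) → ℝ) j
                = 1 + (if m = 0 then 0 else sCoef U m) := by
              rw [Finset.sum_map]
              exact cons_partial U m hmd
            rw [hBsum, if_neg (by omega)]
            rw [hsplit]
            have hcards : A.toLeft.card + A.toRight.card = m + 1 := by omega
            have hmain : ∑ i ∈ A.toLeft, p i + ∑ j ∈ A.toRight, q j
                ≤ 1 + subOpNorm U A.toLeft A.toRight := by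
              rw [Finset.sum_congr rfl fun i (_ : i ∈ A.toLeft) => hp i,
                Finset.sum_congr rfl fun j (_ : j ∈ A.toRight) => hq j]
              exact main_bound hU1 Bm hρtr A.toLeft A.toRight
            exact le_trans hmain (by
              have := subOpNorm_le_sCoef hU1 hIne hJne hcards
              linarith)
        · refine ⟨Finset.univ, ?_, ?_⟩
          · rw [Finset.card_univ, Fintype.card_fin, ← hcard]
            omega
          · rw [hycons, hsplit]
            linarith [hIle, hJle]
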